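/- For t ∈ [0,1) define u(t,x) = −x/(1−t) if 0 ≤ x ≤ (1−t)² and u(t,x) = −(1−t) if x ≥ (1−t)². Then: (a) at every point (t,x) with t ∈ [0,1), x > 0 and x ≠ (1−t)², the function u is differentiable in t and x and satisfies ∂_t u(t,x) + 2·u(t,x)·∂_x u(t,x) = ∫₀^x (∂_x u(t,y))² dy; (b) for every t ∈ [0,1), ∫₀^∞ (∂_x u(t,x))² dx = 1; (c) sup_{x ≥ 0} |u(t,x)| = 1−t, so u(t,·) converges uniformly to 0 as t → 1⁻. -/

import Mathlib

open MeasureTheory Set Real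


noncomputable def vv : ℝ → ℝ → ℝ := fun t x => if x ≤ (1 - t) ^ 2 then -x / (1 - t) else -(1 - t)

lemma vv_hasDerivAt_x_lt {t x : ℝ} (hx : x < (1 - t) ^ 2) :
    HasDerivAt (fun z => vv t z) (-(1 / (1 - t))) x := by
  have h1 : HasDerivAt (fun z : ℝ => -z / (1 - t)) (-(1 / (1 - t))) x := by
    simpa [neg_div] using ((hasDerivAt_id x).neg.div_const (1 - t))
  apply h1.congr_of_eventuallyEq
  filter_upwards [eventually_lt_nhds hx] with z hz
  simp [vv, hz.le]

lemma vv_hasDerivAt_x_gt {t x : ℝ} (hx : (1 - t) ^ 2 < x) :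
    HasDerivAt (fun z => vv t z) 0 x := by
  apply (hasDerivAt_const x (-(1 - t))).congr_of_eventuallyEq
  filter_upwards [eventually_gt_nhds hx] with z hz
  simp [vv, not_le.mpr hz]

lemma vv_hasDerivAt_t_lt {t x : ℝ} (ht : t < 1) (hx : x < (1 - t) ^ 2) :
    HasDerivAt (fun s => vv s x) (-(x / (1 - t) ^ 2)) t := by
  have hne : (1 - t) ≠ 0 := by linarith [ht]
  have hd : HasDerivAt (fun s : ℝ => 1 - s) (-1) t := by
    simpa using (hasDerivAt_id t).const_sub 1
  have h2 := (hd.inv hne).const_mul (-x)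
  have h3 : HasDerivAt (fun s : ℝ => -x / (1 - s)) (-(x / (1 - t) ^ 2)) t := by
    simp only [div_eq_mul_inv]
    exact h2.congr_deriv (by ring)
  apply h3.congr_of_eventuallyEq
  have hcont : ContinuousAt (fun s : ℝ => (1 - s) ^ 2) t := by fun_prop
  filter_upwards [hcont.eventually (eventually_gt_nhds hx)] with s hs
  simp [vv, hs.le]

lemma vv_hasDerivAt_t_gt {t x : ℝ} (hx : (1 - t) ^ 2 < x) :
    HasDerivAt (fun s => vv s x) 1 t := by
  have hd : HasDerivAt (fun s : ℝ => -(1 - s)) 1 t := by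
    exact ((hasDerivAt_id t).const_sub 1).neg.congr_deriv (by ring)
  apply hd.congr_of_eventuallyEq
  have hcont : ContinuousAt (fun s : ℝ => (1 - s) ^ 2) t := by fun_prop
  filter_upwards [hcont.eventually (eventually_lt_nhds hx)] with s hs
  simp [vv, not_le.mpr hs]

lemma vv_deriv_sq_ae {t : ℝ} (ht : t < 1) :
    (fun y => (deriv (fun z => vv t z) y) ^ 2)
      =ᵐ[volume] (Set.Iio ((1 - t) ^ 2)).indicator (fun _ => ((1 - t) ^ 2)⁻¹) := by
  have h0 : (volume : Measure ℝ) {(1 - t) ^ 2} = 0 := measure_singleton _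
  filter_upwards [compl_mem_ae_iff.mpr h0] with y hy
  simp only [mem_compl_iff, mem_singleton_iff] at hy
  rcases lt_or_gt_of_ne hy with h | h
  · rw [(vv_hasDerivAt_x_lt h).deriv, indicator_of_mem (Set.mem_Iio.mpr h)]
    rw [neg_sq, div_pow, one_pow]
    exact one_div _
  · rw [(vv_hasDerivAt_x_gt h).deriv, indicator_of_notMem (by simp [Set.mem_Iio, not_lt, h.le])]
    ring

lemma vv_energy {t : ℝ} (ht : t < 1) :
    ∫ x in Set.Ioi (0:ℝ), (deriv (fun z => vv t z) x) ^ 2 = 1 := by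
  have h1t : (0:ℝ) < 1 - t := by linarith
  have hc : (0:ℝ) < (1 - t) ^ 2 := by positivity
  rw [integral_congr_ae (ae_restrict_of_ae (vv_deriv_sq_ae ht))]
  rw [integral_indicator measurableSet_Iio, Measure.restrict_restrict measurableSet_Iio,
      setIntegral_const]
  rw [show Set.Iio ((1-t)^2) ∩ Set.Ioi 0 = Set.Ioo 0 ((1-t)^2) from by
    ext y; simp [Set.mem_Ioo, and_comm]]
  rw [Real.volume_real_Ioo_of_le hc.le, sub_zero, smul_eq_mul]
  field_simp

lemma vv_int_lt {t x : ℝ} (hx0 : 0 ≤ x) (hlt : x < (1-t)^2) :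
    ∫ y in (0:ℝ)..x, (deriv (fun z => vv t z) y) ^ 2 = x / (1-t)^2 := by
  rw [intervalIntegral.integral_congr (g := fun _ => (1/(1-t))^2) ?_]
  · rw [intervalIntegral.integral_const, smul_eq_mul, sub_zero, div_pow, one_pow,
      mul_one_div]
  · intro y hy
    rw [Set.uIcc_of_le hx0] at hy
    have hylt : y < (1-t)^2 := lt_of_le_of_lt hy.2 hlt
    show deriv (fun z => vv t z) y ^ 2 = (1/(1-t))^2
    rw [(vv_hasDerivAt_x_lt hylt).deriv, neg_sq]

lemma vv_int_gt {t x : ℝ} (ht : t < 1) (hgt : (1-t)^2 < x) :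
    ∫ y in (0:ℝ)..x, (deriv (fun z => vv t z) y) ^ 2 = 1 := by
  have h1t : (0:ℝ) < 1 - t := by linarith
  have hc : (0:ℝ) < (1-t)^2 := by positivity
  rw [intervalIntegral.integral_of_le (le_of_lt (hc.trans hgt))]
  rw [integral_congr_ae (ae_restrict_of_ae (vv_deriv_sq_ae ht))]
  rw [integral_indicator measurableSet_Iio, Measure.restrict_restrict measurableSet_Iio,
      setIntegral_const, smul_eq_mul]
  rw [show Set.Iio ((1-t)^2) ∩ Set.Ioc 0 x = Set.Ioo 0 ((1-t)^2) from by
    ext y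
    simp only [Set.mem_inter_iff, Set.mem_Iio, Set.mem_Ioc, Set.mem_Ioo]
    constructor
    · rintro ⟨h1, h2, _⟩; exact ⟨h2, h1⟩
    · rintro ⟨h1, h2⟩; exact ⟨h2, h1, le_of_lt (h2.trans hgt)⟩]
  rw [Real.volume_real_Ioo_of_le hc.le, sub_zero]
  field_simp

lemma vv_sup {t : ℝ} (ht : t < 1) :
    sSup {r : ℝ | ∃ x : ℝ, 0 ≤ x ∧ r = |vv t x|} = 1 - t := by
  have h1t : (0:ℝ) < 1 - t := by linarith
  have hub : ∀ r ∈ {r : ℝ | ∃ x : ℝ, 0 ≤ x ∧ r = |vv t x|}, r ≤ 1 - t := by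
    rintro r ⟨x, hx0, rfl⟩
    by_cases hle : x ≤ (1 - t) ^ 2
    · have : vv t x = -x / (1 - t) := by simp [vv, hle]
      rw [this, neg_div, abs_neg, abs_div, abs_of_nonneg hx0, abs_of_pos h1t,
        div_le_iff₀ h1t]
      nlinarith
    · have : vv t x = -(1 - t) := by simp [vv, hle]
      rw [this, abs_neg, abs_of_pos h1t]
  have hmem : (1 - t) ∈ {r : ℝ | ∃ x : ℝ, 0 ≤ x ∧ r = |vv t x|} := by
    refine ⟨(1 - t) ^ 2, sq_nonneg _, ?_⟩
    have : vv t ((1 - t) ^ 2) = -(1 - t) := by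
      simp only [vv, le_refl, if_pos]
      field_simp
    rw [this, abs_neg, abs_of_pos h1t]
  exact le_antisymm (csSup_le ⟨_, hmem⟩ hub) (le_csSup ⟨1 - t, hub⟩ hmem)

/-- Example 1 of the paper, before blow-up: for `t ∈ [0,1)` the function
`u(t,x) = −x/(1−t)` for `0 ≤ x ≤ (1−t)²`, `u(t,x) = −(1−t)` for `x ≥ (1−t)²`
solves `u_t + 2u·u_x = ∫₀^x u_x² dy` away from the kink, has energy
`∫₀^∞ u_x² dx = 1`, and `sup_{x≥0}|u(t,x)| = 1−t → 0` as `t → 1⁻`. -/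
theorem stmt15 (u : ℝ → ℝ → ℝ)
    (hu : ∀ t x : ℝ, u t x = if x ≤ (1 - t) ^ 2 then -x / (1 - t) else -(1 - t)) :
    (∀ t x : ℝ, 0 ≤ t → t < 1 → 0 < x → x ≠ (1 - t) ^ 2 →
      DifferentiableAt ℝ (fun s => u s x) t ∧
      DifferentiableAt ℝ (fun z => u t z) x ∧
      deriv (fun s => u s x) t + 2 * u t x * deriv (fun z => u t z) x =
        ∫ y in (0:ℝ)..x, (deriv (fun z => u t z) y) ^ 2) ∧
    (∀ t : ℝ, 0 ≤ t → t < 1 →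
      ∫ x in Set.Ioi (0:ℝ), (deriv (fun z => u t z) x) ^ 2 = 1) ∧
    (∀ t : ℝ, 0 ≤ t → t < 1 →
      sSup {r : ℝ | ∃ x : ℝ, 0 ≤ x ∧ r = |u t x|} = 1 - t) ∧
    Filter.Tendsto (fun t => sSup {r : ℝ | ∃ x : ℝ, 0 ≤ x ∧ r = |u t x|})
      (nhdsWithin 1 (Set.Ico 0 1)) (nhds 0) := by
  have huv : u = vv := by funext t x; rw [hu]; rfl
  subst huv
  refine ⟨?_, fun t _ ht1 => vv_energy ht1, fun t _ ht1 => vv_sup ht1, ?_⟩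
  · intro t x _ ht1 hx0 hxc
    have h1t : (0:ℝ) < 1 - t := by linarith
    rcases lt_or_gt_of_ne hxc with hlt | hgt
    · refine ⟨(vv_hasDerivAt_t_lt ht1 hlt).differentiableAt,
        (vv_hasDerivAt_x_lt hlt).differentiableAt, ?_⟩
      rw [(vv_hasDerivAt_t_lt ht1 hlt).deriv, (vv_hasDerivAt_x_lt hlt).deriv,
        vv_int_lt hx0.le hlt, show vv t x = -x / (1 - t) from by simp [vv, hlt.le]]
      field_simp
      ring
    · refine ⟨(vv_hasDerivAt_t_gt hgt).differentiableAt,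
        (vv_hasDerivAt_x_gt hgt).differentiableAt, ?_⟩
      rw [(vv_hasDerivAt_t_gt hgt).deriv, (vv_hasDerivAt_x_gt hgt).deriv,
        vv_int_gt ht1 hgt]
      ring
  · have hT : Filter.Tendsto (fun t : ℝ => 1 - t) (nhdsWithin 1 (Set.Ico 0 1)) (nhds 0) := by
      have hc : Continuous (fun t : ℝ => 1 - t) := by continuity
      have := (hc.tendsto (1:ℝ)).mono_left (nhdsWithin_le_nhds (s := Set.Ico (0:ℝ) 1))
      simpa using this
    refine hT.congr' ?_
    filter_upwards [eventually_mem_nhdsWithin] with t ht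
    exact (vv_sup ht.2).symm
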